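/- Fix σ > 0, h > 0, T > 0 and B > 0. Then the limit as a → 0 from the left of E1(h, T, a) + E2(h, T, a)/B exists and equals (σ⁴T²/4)·h² + (σ⁴T⁵/3)·1/(hB) + σ⁴T²(−2T² + 2hT − h²)/(3B), where E1(h,T,a) = σ⁴(−2ah + e^{2ah} − 1)²(e^{2aT} − 1)² / (16a⁴(e^{2ah} − 1)²) and E2(h,T,a) = σ⁴T[h(e^{2aT} − 1)(4e^{2ah} + e^{2aT} + 1) − (e^{2ah} − 1)(e^{2ah} + 4e^{2aT} + 1)T] / (2a²(e^{2ah} − 1)²). -/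

import Mathlib

open Filter Real Set Topology

private lemma tendsto_exp_quartic :
    Tendsto (fun x : ℝ => (Real.exp x - 1 - x - x ^ 2 / 2 - x ^ 3 / 6) / x ^ 4)
      (𝓝[≠] (0 : ℝ)) (𝓝 (1 / 24)) := by
  have hne : ∀ᶠ x : ℝ in 𝓝[≠] (0 : ℝ), x ≠ 0 := self_mem_nhdsWithin
  -- innermost: (exp x - 1)/(24 x) → 1/24
  have h4 : Tendsto (fun x : ℝ => Real.exp x / 24) (𝓝[≠] (0 : ℝ)) (𝓝 (1 / 24)) := by
    exact ((Real.continuous_exp.div_const 24).tendsto' 0 (1/24)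
      (by norm_num [Real.exp_zero])).mono_left nhdsWithin_le_nhds
  have h3 : Tendsto (fun x : ℝ => (Real.exp x - 1) / (24 * x)) (𝓝[≠] (0 : ℝ)) (𝓝 (1 / 24)) := by
    apply HasDerivAt.lhopital_zero_nhdsNE (f' := fun x => Real.exp x) (g' := fun _ => (24 : ℝ))
    · exact Eventually.of_forall fun x => by
        simpa using (Real.hasDerivAt_exp x).sub_const 1
    · exact Eventually.of_forall fun x => by
        simpa using (hasDerivAt_id x).const_mul (24 : ℝ)
    · exact Eventually.of_forall fun x => by norm_num
    · exact ((by fun_prop : Continuous fun x : ℝ => Real.exp x - 1).tendsto' 0 0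
        (by norm_num)).mono_left nhdsWithin_le_nhds
    · exact ((by fun_prop : Continuous fun x : ℝ => 24 * x).tendsto' 0 0
        (by norm_num)).mono_left nhdsWithin_le_nhds
    · exact h4
  have h2 : Tendsto (fun x : ℝ => (Real.exp x - 1 - x) / (12 * x ^ 2))
      (𝓝[≠] (0 : ℝ)) (𝓝 (1 / 24)) := by
    apply HasDerivAt.lhopital_zero_nhdsNE (f' := fun x => Real.exp x - 1)
      (g' := fun x => 24 * x)
    · exact Eventually.of_forall fun x => by
        exact ((Real.hasDerivAt_exp x).sub_const 1).sub (hasDerivAt_id x)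
    · exact Eventually.of_forall fun x => by
        have := ((hasDerivAt_pow 2 x).const_mul (12 : ℝ))
        refine this.congr_deriv ?_
        push_cast; ring
    · exact hne.mono fun x hx => by
        simp only [ne_eq, mul_eq_zero]
        push_neg
        exact ⟨by norm_num, hx⟩
    · exact ((by fun_prop : Continuous fun x : ℝ => Real.exp x - 1 - x).tendsto' 0 0
        (by norm_num)).mono_left nhdsWithin_le_nhds
    · exact ((by fun_prop : Continuous fun x : ℝ => 12 * x ^ 2).tendsto' 0 0
        (by norm_num)).mono_left nhdsWithin_le_nhds
    · exact h3
  have h1 : Tendsto (fun x : ℝ => (Real.exp x - 1 - x - x ^ 2 / 2) / (4 * x ^ 3))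
      (𝓝[≠] (0 : ℝ)) (𝓝 (1 / 24)) := by
    apply HasDerivAt.lhopital_zero_nhdsNE (f' := fun x => Real.exp x - 1 - x)
      (g' := fun x => 12 * x ^ 2)
    · exact Eventually.of_forall fun x => by
        have := (((Real.hasDerivAt_exp x).sub_const 1).sub (hasDerivAt_id x)).sub
          ((hasDerivAt_pow 2 x).div_const 2)
        refine this.congr_deriv ?_
        push_cast; ring
    · exact Eventually.of_forall fun x => by
        have := ((hasDerivAt_pow 3 x).const_mul (4 : ℝ))
        refine this.congr_deriv ?_
        push_cast; ring
    · exact hne.mono fun x hx => by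
        simp only [ne_eq, mul_eq_zero, pow_eq_zero_iff]
        push_neg
        exact ⟨by norm_num, by simp [hx]⟩
    · exact ((by fun_prop : Continuous fun x : ℝ => Real.exp x - 1 - x - x ^ 2 / 2).tendsto' 0 0
        (by norm_num)).mono_left nhdsWithin_le_nhds
    · exact ((by fun_prop : Continuous fun x : ℝ => 4 * x ^ 3).tendsto' 0 0
        (by norm_num)).mono_left nhdsWithin_le_nhds
    · exact h2
  apply HasDerivAt.lhopital_zero_nhdsNE (f' := fun x => Real.exp x - 1 - x - x ^ 2 / 2)
    (g' := fun x => 4 * x ^ 3)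
  · exact Eventually.of_forall fun x => by
      have := ((((Real.hasDerivAt_exp x).sub_const 1).sub (hasDerivAt_id x)).sub
        ((hasDerivAt_pow 2 x).div_const 2)).sub ((hasDerivAt_pow 3 x).div_const 6)
      refine this.congr_deriv ?_
      push_cast; ring
  · exact Eventually.of_forall fun x => by
      have := hasDerivAt_pow 4 x
      norm_num at this
      exact this
  · exact hne.mono fun x hx => by
      simp only [ne_eq, mul_eq_zero, pow_eq_zero_iff]
      push_neg
      exact ⟨by norm_num, by simp [hx]⟩
  · exact ((by fun_prop : Continuous fun x : ℝ => Real.exp x - 1 - x - x ^ 2 / 2 - x ^ 3 / 6).tendsto' 0 0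
      (by norm_num)).mono_left nhdsWithin_le_nhds
  · exact ((by fun_prop : Continuous fun x : ℝ => x ^ 4).tendsto' 0 0
      (by norm_num)).mono_left nhdsWithin_le_nhds
  · exact h1

private noncomputable def Wfun (c a : ℝ) : ℝ :=
  (Real.exp (2 * a * c) - 1 - 2 * a * c - 2 * a ^ 2 * c ^ 2 - 4 / 3 * a ^ 3 * c ^ 3) /
    (16 * a ^ 4 * c ^ 4)

private lemma Wfun_tendsto (c : ℝ) (hc : 0 < c) :
    Tendsto (Wfun c) (𝓝[<] (0 : ℝ)) (𝓝 (1 / 24)) := by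
  have hmap : Tendsto (fun a : ℝ => 2 * a * c) (𝓝[<] (0 : ℝ)) (𝓝[≠] (0 : ℝ)) := by
    rw [tendsto_nhdsWithin_iff]
    refine ⟨((by fun_prop : Continuous fun a : ℝ => 2 * a * c).tendsto' 0 0
      (by norm_num)).mono_left nhdsWithin_le_nhds, ?_⟩
    filter_upwards [self_mem_nhdsWithin] with a (ha : a < 0)
    have : 2 * a * c < 0 := by nlinarith
    simpa using this.ne
  have hcomp := tendsto_exp_quartic.comp hmap
  refine hcomp.congr fun a => ?_
  show (Real.exp (2 * a * c) - 1 - (2 * a * c) - (2 * a * c) ^ 2 / 2 - (2 * a * c) ^ 3 / 6) /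
      (2 * a * c) ^ 4 = Wfun c a
  rw [Wfun, show ((2 : ℝ) * a * c) ^ 4 = 16 * a ^ 4 * c ^ 4 by ring,
    show ((2 : ℝ) * a * c) ^ 2 / 2 = 2 * a ^ 2 * c ^ 2 by ring,
    show ((2 : ℝ) * a * c) ^ 3 / 6 = 4 / 3 * a ^ 3 * c ^ 3 by ring]

private lemma Wfun_exp (c a : ℝ) (ha : a ≠ 0) (hc : c ≠ 0) :
    Real.exp (2 * a * c) = 1 + 2 * a * c + 2 * a ^ 2 * c ^ 2 + 4 / 3 * a ^ 3 * c ^ 3 +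
      16 * a ^ 4 * c ^ 4 * Wfun c a := by
  rw [Wfun]
  field_simp
  ring

private noncomputable def Ffun (σ h T B : ℝ) (p : ℝ × ℝ × ℝ) : ℝ :=
  σ ^ 4 * (2 * h ^ 2 + 4 / 3 * p.1 * h ^ 3 + 16 * p.1 ^ 2 * h ^ 4 * p.2.1) ^ 2 *
      (2 * T + 2 * p.1 * T ^ 2 + 4 / 3 * p.1 ^ 2 * T ^ 3 + 16 * p.1 ^ 3 * T ^ 4 * p.2.2) ^ 2 /
    (16 * (2 * h + 2 * p.1 * h ^ 2 + 4 / 3 * p.1 ^ 2 * h ^ 3 +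
      16 * p.1 ^ 3 * h ^ 4 * p.2.1) ^ 2) +
  σ ^ 4 * T * ((-4/3) * h * T ^ 4 + 96 * h * T ^ 4 * p.2.2 + (-16/3) * h ^ 2 * T ^ 3 + (16/3) * h ^ 3 * T ^ 2 + (4/3) * h ^ 4 * T + (-96) * h ^ 4 * T * p.2.1 + (16/3) * p.1 * h * T ^ 5 + (-64) * p.1 * h * T ^ 5 * p.2.2 + (-32/3) * p.1 * h ^ 2 * T ^ 4 + 128 * p.1 * h ^ 2 * T ^ 4 * p.2.2 + (32/3) * p.1 * h ^ 4 * T ^ 2 + (-128) * p.1 * h ^ 4 * T ^ 2 * p.2.1 + (-16/3) * p.1 * h ^ 5 * T + 64 * p.1 * h ^ 5 * T * p.2.1 + (16/9) * p.1 ^ 2 * h * T ^ 6 + 64 * p.1 ^ 2 * h * T ^ 6 * p.2.2 + (-128) * p.1 ^ 2 * h ^ 2 * T ^ 5 * p.2.2 + (-64/9) * p.1 ^ 2 * h ^ 3 * T ^ 4 + 128 * p.1 ^ 2 * h ^ 3 * T ^ 4 * p.2.2 + (64/9) * p.1 ^ 2 * h ^ 4 * T ^ 3 + (-128) * p.1 ^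 2 * h ^ 4 * T ^ 3 * p.2.1 + 128 * p.1 ^ 2 * h ^ 5 * T ^ 2 * p.2.1 + (-16/9) * p.1 ^ 2 * h ^ 6 * T + (-64) * p.1 ^ 2 * h ^ 6 * T * p.2.1 + (128/3) * p.1 ^ 3 * h * T ^ 7 * p.2.2 + (-256/3) * p.1 ^ 3 * h ^ 3 * T ^ 5 * p.2.2 + (256/3) * p.1 ^ 3 * h ^ 4 * T ^ 4 * p.2.2 + (-256/3) * p.1 ^ 3 * h ^ 4 * T ^ 4 * p.2.1 + (256/3) * p.1 ^ 3 * h ^ 5 * T ^ 3 * p.2.1 + (-128/3) * p.1 ^ 3 * h ^ 7 * T * p.2.1 + 256 * p.1 ^ 4 * h * T ^ 8 * p.2.2 ^ 2 + (-1024) * p.1 ^ 4 * h ^ 4 * T ^ 5 * p.2.1 * p.2.2 + 1024 * p.1 ^ 4 * h ^ 5 * T ^ 4 * p.2.1 * p.2.2 + (-256) * p.1 ^ 4 * h ^ 8 * T * p.2.1 ^ 2) /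
    (2 * (2 * h + 2 * p.1 * h ^ 2 + 4 / 3 * p.1 ^ 2 * h ^ 3 +
      16 * p.1 ^ 3 * h ^ 4 * p.2.1) ^ 2 * B)

set_option maxHeartbeats 1000000 in
private lemma Ffun_contAt (σ h T B : ℝ) (hh : 0 < h) (hB : 0 < B) :
    ContinuousAt (Ffun σ h T B) ((0 : ℝ), (1 / 24 : ℝ), (1 / 24 : ℝ)) := by
  unfold Ffun
  apply ContinuousAt.add
  · apply ContinuousAt.div (by fun_prop) (by fun_prop)
    norm_num [hh.ne']
  · apply ContinuousAt.div (by fun_prop) (by fun_prop)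
    norm_num [hh.ne', hB.ne']

set_option maxHeartbeats 1000000 in
private lemma Ffun_val (σ h T B : ℝ) (hh : 0 < h) (hT : 0 < T) (hB : 0 < B) :
    Ffun σ h T B ((0 : ℝ), (1 / 24 : ℝ), (1 / 24 : ℝ)) =
      σ ^ 4 * T ^ 2 / 4 * h ^ 2 + σ ^ 4 * T ^ 5 / 3 * (1 / (h * B)) +
        σ ^ 4 * T ^ 2 * (-2 * T ^ 2 + 2 * h * T - h ^ 2) / (3 * B) := by
  unfold Ffun
  norm_num
  field_simp
  ring

set_option maxHeartbeats 4000000 in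
private lemma Ffun_eq (σ h T B : ℝ) (hh : 0 < h) (hT : 0 < T) (hB : 0 < B)
    (a : ℝ) (ha : a < 0) :
    σ ^ 4 * (-2 * a * h + Real.exp (2 * a * h) - 1) ^ 2 *
        (Real.exp (2 * a * T) - 1) ^ 2 /
      (16 * a ^ 4 * (Real.exp (2 * a * h) - 1) ^ 2) +
    σ ^ 4 * T * (h * (Real.exp (2 * a * T) - 1) *
          (4 * Real.exp (2 * a * h) + Real.exp (2 * a * T) + 1) -
        (Real.exp (2 * a * h) - 1) *
          (Real.exp (2 * a * h) + 4 * Real.exp (2 * a * T) + 1) * T) /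
      (2 * a ^ 2 * (Real.exp (2 * a * h) - 1) ^ 2) / B =
    Ffun σ h T B (a, Wfun h a, Wfun T a) := by
  have hane : a ≠ 0 := ha.ne
  have hEh := Wfun_exp h a hane hh.ne'
  have hET := Wfun_exp T a hane hT.ne'
  have hexplt : Real.exp (2 * a * h) < 1 := by
    rw [Real.exp_lt_one_iff]
    nlinarith
  have hne : Real.exp (2 * a * h) - 1 ≠ 0 := sub_ne_zero.mpr hexplt.ne
  set w1 := Wfun h a with hw1
  set w2 := Wfun T a with hw2
  have hne1 : 2 * a * h + 2 * a ^ 2 * h ^ 2 + 4 / 3 * a ^ 3 * h ^ 3 +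
      16 * a ^ 4 * h ^ 4 * w1 ≠ 0 := by
    rw [hEh] at hne
    intro hz
    apply hne
    linarith
  have hL1a : (2 * h + 2 * a * h ^ 2 + 4 / 3 * a ^ 2 * h ^ 3 + 16 * a ^ 3 * h ^ 4 * w1) ≠ 0 := by
    intro hz
    apply hne1
    have hfac : 2 * a * h + 2 * a ^ 2 * h ^ 2 + 4 / 3 * a ^ 3 * h ^ 3 + 16 * a ^ 4 * h ^ 4 * w1 =
        a * (2 * h + 2 * a * h ^ 2 + 4 / 3 * a ^ 2 * h ^ 3 + 16 * a ^ 3 * h ^ 4 * w1) := by ring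
    rw [hfac, hz, mul_zero]
  have hden : (1 + 2 * a * h + 2 * a ^ 2 * h ^ 2 + 4 / 3 * a ^ 3 * h ^ 3 +
      16 * a ^ 4 * h ^ 4 * w1 - 1) ≠ 0 := by
    intro hz; apply hne1; linarith
  unfold Ffun
  simp only
  rw [hEh, hET]
  congr 1
  · rw [div_eq_div_iff
      (mul_ne_zero (mul_ne_zero (by norm_num) (pow_ne_zero 4 hane)) (pow_ne_zero 2 hden))
      (mul_ne_zero (by norm_num) (pow_ne_zero 2 hL1a))]
    ring
  · rw [div_div, div_eq_div_iff
      (mul_ne_zero (mul_ne_zero (mul_ne_zero (by norm_num) (pow_ne_zero 2 hane))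
        (pow_ne_zero 2 hden)) hB.ne')
      (mul_ne_zero (mul_ne_zero (by norm_num) (pow_ne_zero 2 hL1a)) hB.ne')]
    ring

/-- Continuity of the exact finite-horizon undiscounted MSE at `a = 0`:
for fixed `σ, h, T, B > 0`, the limit as `a → 0⁻` of `E1(h,T,a) + E2(h,T,a)/B`
exists and equals `(σ⁴T²/4)h² + (σ⁴T⁵/3)/(hB) + σ⁴T²(−2T² + 2hT − h²)/(3B)`. -/
theorem stmt_17 (σ h T B : ℝ) (hσ : 0 < σ) (hh : 0 < h) (hT : 0 < T) (hB : 0 < B) :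
    Filter.Tendsto
      (fun a : ℝ =>
        σ ^ 4 * (-2 * a * h + Real.exp (2 * a * h) - 1) ^ 2 *
            (Real.exp (2 * a * T) - 1) ^ 2 /
          (16 * a ^ 4 * (Real.exp (2 * a * h) - 1) ^ 2) +
        σ ^ 4 * T * (h * (Real.exp (2 * a * T) - 1) *
              (4 * Real.exp (2 * a * h) + Real.exp (2 * a * T) + 1) -
            (Real.exp (2 * a * h) - 1) *
              (Real.exp (2 * a * h) + 4 * Real.exp (2 * a * T) + 1) * T) /
          (2 * a ^ 2 * (Real.exp (2 * a * h) - 1) ^ 2) / B)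
      (nhdsWithin 0 (Set.Iio 0))
      (nhds (σ ^ 4 * T ^ 2 / 4 * h ^ 2 + σ ^ 4 * T ^ 5 / 3 * (1 / (h * B)) +
        σ ^ 4 * T ^ 2 * (-2 * T ^ 2 + 2 * h * T - h ^ 2) / (3 * B))) := by
  have hW1 : Tendsto (Wfun h) (𝓝[<] (0 : ℝ)) (𝓝 (1 / 24)) := Wfun_tendsto h hh
  have hW2 : Tendsto (Wfun T) (𝓝[<] (0 : ℝ)) (𝓝 (1 / 24)) := Wfun_tendsto T hT
  have ha0 : Tendsto (fun a : ℝ => a) (𝓝[<] (0 : ℝ)) (𝓝 0) :=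
    tendsto_id.mono_right nhdsWithin_le_nhds
  have hprod : Tendsto (fun a : ℝ => ((a, Wfun h a, Wfun T a) : ℝ × ℝ × ℝ))
      (𝓝[<] (0 : ℝ)) (𝓝 ((0 : ℝ), (1 / 24 : ℝ), (1 / 24 : ℝ))) :=
    ha0.prodMk_nhds (hW1.prodMk_nhds hW2)
  have hcomp := ((Ffun_contAt σ h T B hh hB).tendsto).comp hprod
  rw [Ffun_val σ h T B hh hT hB] at hcomp
  refine hcomp.congr' ?_
  filter_upwards [self_mem_nhdsWithin] with a (ha : a < 0)
  exact (Ffun_eq σ h T B hh hT hB a ha).symm
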